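/- Let B_0 be an invertible n×n complex matrix, α_1, ..., α_m distinct nonzero complex numbers, and suppose ‖B_0⁻¹‖⁻¹ > Σ_{i=1}^m ‖B_i‖/|α_i|. Define p(x) = x - ‖B_0⁻¹‖⁻¹ - Σ_i ‖B_i‖/(x - |α_i|) and let R̃ be its unique root below min_i |α_i|. Then 0 < R̃ < min_i |α_i|, and for all λ ∈ ℂ with |λ| < R̃, one has ‖λI + Σ_{i=1}^m B_i/(λ - α_i)‖ < ‖B_0⁻¹‖⁻¹. -/

import Mathlib

/-- With `B₀` invertible, nonzero distinct poles `αᵢ`, and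
`‖B₀⁻¹‖⁻¹ > Σ ‖Bᵢ‖/|αᵢ|`, the root `R̃` of
`p(x) = x - ‖B₀⁻¹‖⁻¹ - Σ ‖Bᵢ‖/(x - |αᵢ|)` lying below all `|αᵢ|` satisfies
`0 < R̃ < minᵢ |αᵢ|`, and for all `λ ∈ ℂ` with `|λ| < R̃` one has
`‖λI + Σ Bᵢ/(λ - αᵢ)‖ < ‖B₀⁻¹‖⁻¹`. -/
theorem stmt_12 (V : Type*) [NormedAddCommGroup V] [NormedSpace ℂ V]
    (m : ℕ) (B0 B0inv : V →L[ℂ] V)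
    (hinv : B0 * B0inv = 1 ∧ B0inv * B0 = 1)
    (B : Fin m → V →L[ℂ] V)
    (α : Fin m → ℂ) (hα : Function.Injective α) (hα0 : ∀ i, α i ≠ 0)
    (hdom : ‖B0inv‖⁻¹ > ∑ i, ‖B i‖ / ‖α i‖)
    (Rt : ℝ)
    (hroot : Rt - ‖B0inv‖⁻¹ - ∑ i, ‖B i‖ / (Rt - ‖α i‖) = 0)
    (hRtlt : ∀ i, Rt < ‖α i‖) :
    0 < Rt ∧
    ∀ lam : ℂ, ‖lam‖ < Rt →
      ‖lam • (1 : V →L[ℂ] V) + ∑ i, (lam - α i)⁻¹ • B i‖ < ‖B0inv‖⁻¹ := by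
  have hαpos : ∀ i, 0 < ‖α i‖ := fun i => norm_pos_iff.mpr (hα0 i)
  have hc0 : (0:ℝ) ≤ ∑ i, ‖B i‖ / ‖α i‖ := by
    apply Finset.sum_nonneg; intro i _
    have := hαpos i; positivity
  have hcpos : 0 < ‖B0inv‖⁻¹ := lt_of_le_of_lt hc0 hdom
  have hflip : ∑ i, ‖B i‖ / (Rt - ‖α i‖)
      = -∑ i, ‖B i‖ / (‖α i‖ - Rt) := by
    rw [← Finset.sum_neg_distrib]
    apply Finset.sum_congr rfl
    intro i _
    rw [← div_neg]
    ring_nf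
  have hRt : 0 < Rt := by
    by_contra h
    push_neg at h
    have key : ∀ i ∈ (Finset.univ : Finset (Fin m)),
        ‖B i‖ / (‖α i‖ - Rt) ≤ ‖B i‖ / ‖α i‖ := by
      intro i _
      gcongr
      · exact hαpos i
      · linarith
    have hsum := Finset.sum_le_sum key
    rw [hflip] at hroot
    linarith
  refine ⟨hRt, fun lam hlam => ?_⟩
  have hsub : ∀ i, ‖α i‖ - Rt < ‖lam - α i‖ := by
    intro i
    have h1 : ‖α i‖ - ‖lam‖ ≤ ‖α i - lam‖ := by
      exact norm_sub_norm_le (α i) lam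
    have h2 : ‖α i - lam‖ = ‖lam - α i‖ := by
      exact norm_sub_rev (α i) lam
    linarith
  have h1 : ‖lam • (1 : V →L[ℂ] V)‖ ≤ ‖lam‖ := by
    rw [norm_smul lam (1 : V →L[ℂ] V)]
    have h1' : ‖(1 : V →L[ℂ] V)‖ ≤ 1 := by
      simpa [ContinuousLinearMap.one_def] using
        ContinuousLinearMap.norm_id_le (𝕜 := ℂ) (E := V)
    nlinarith [norm_nonneg lam, norm_nonneg (1 : V →L[ℂ] V)]
  have h2 : ∀ i, ‖(lam - α i)⁻¹ • B i‖ ≤ ‖B i‖ / (‖α i‖ - Rt) := by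
    intro i
    rw [norm_smul ((lam - α i)⁻¹) (B i), norm_inv, inv_mul_eq_div]
    gcongr
    · linarith [hRtlt i]
    · exact (hsub i).le
  have hkey : ‖lam • (1 : V →L[ℂ] V) + ∑ i, (lam - α i)⁻¹ • B i‖
      ≤ ‖lam‖ + ∑ i, ‖B i‖ / (‖α i‖ - Rt) := by
    calc ‖lam • (1 : V →L[ℂ] V) + ∑ i, (lam - α i)⁻¹ • B i‖
        ≤ ‖lam • (1 : V →L[ℂ] V)‖ + ‖∑ i, (lam - α i)⁻¹ • B i‖ := norm_add_le _ _
      _ ≤ ‖lam • (1 : V →L[ℂ] V)‖ + ∑ i, ‖(lam - α i)⁻¹ • B i‖ := by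
          gcongr
          exact norm_sum_le _ _
      _ ≤ ‖lam‖ + ∑ i, ‖B i‖ / (‖α i‖ - Rt) :=
          add_le_add h1 (Finset.sum_le_sum fun i _ => h2 i)
  rw [hflip] at hroot
  linarith
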